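/- For integers m ≥ 2, s ≥ 1, t ≥ 1, consider the Cameron–Walker graph G^{(2)}_{m,s,t} with p = 2, s_1 = ... = s_{m−1} = 1, s_m = s, t_1 = t, t_2 = 0, and bipartite edges {v_1,w_1}, {v_1,w_2}, {v_2,w_2}, ..., {v_m,w_2}. Then |V(G)| = 2m + s + 2t + 1, the independence number of G is m + s + t, and i(G) = m + 1. -/
import Mathlib


/-- A finite set of vertices is independent in `G` if no two of its members are adjacent. -/
def SimpleGraph.IsIndepFinset {V : Type*} (G : SimpleGraph V) (A : Finset V) : Prop :=
  ∀ u ∈ A, ∀ v ∈ A, ¬ G.Adj u v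

/-- `A` is an independent dominating set of `G`: `A` is independent and
`A ∪ N_G(A) = V(G)`, i.e. every vertex is in `A` or adjacent to a member of `A`. -/
def SimpleGraph.IsIndepDomFinset {V : Type*} (G : SimpleGraph V) (A : Finset V) : Prop :=
  G.IsIndepFinset A ∧ ∀ v : V, v ∈ A ∨ ∃ u ∈ A, G.Adj u v

/-- The vertex set of a Cameron–Walker graph in standard form:
the `vᵢ` (`i : Fin m`), the `w_j` (`j : Fin p`), the `sᵢ` leaves attached to `vᵢ`,
and the two extra vertices of each of the `t_j` pendant triangles attached to `w_j`. -/
abbrev CWVert (m p : ℕ) (s : Fin m → ℕ) (t : Fin p → ℕ) : Type :=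
  (Fin m) ⊕ (Fin p) ⊕ (Σ i : Fin m, Fin (s i)) ⊕ (Σ j : Fin p, Fin (t j) × Fin 2)

/-- The Cameron–Walker graph in standard form: a bipartite graph between the `vᵢ`
and the `w_j` with edge relation `E`, together with `sᵢ` pendant leaves at each `vᵢ`
and `t_j` pendant triangles at each `w_j`. -/
def CWGraph (m p : ℕ) (E : Fin m → Fin p → Prop) (s : Fin m → ℕ) (t : Fin p → ℕ) :
    SimpleGraph (CWVert m p s t) :=
  SimpleGraph.fromRel (fun u v =>
    match u, v with
    | Sum.inl i, Sum.inr (Sum.inl j) => E i j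
    | Sum.inl i, Sum.inr (Sum.inr (Sum.inl ⟨i', _⟩)) => i = i'
    | Sum.inr (Sum.inl j), Sum.inr (Sum.inr (Sum.inr ⟨j', _⟩)) => j = j'
    | Sum.inr (Sum.inr (Sum.inr ⟨j, l, _⟩)), Sum.inr (Sum.inr (Sum.inr ⟨j', l', _⟩)) =>
        j = j' ∧ HEq l l'
    | _, _ => False)

/-- The bipartite part of the Cameron–Walker graph, as a graph on `{v₁,…,vₘ} ∪ {w₁,…,w_p}`. -/
def CWBip (m p : ℕ) (E : Fin m → Fin p → Prop) : SimpleGraph ((Fin m) ⊕ (Fin p)) :=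
  SimpleGraph.fromRel (fun u v =>
    match u, v with
    | Sum.inl i, Sum.inr j => E i j
    | _, _ => False)

namespace CWaux

variable {m p : ℕ} {E : Fin m → Fin p → Prop} {s : Fin m → ℕ} {t : Fin p → ℕ}

abbrev vx (i : Fin m) : CWVert m p s t := Sum.inl i
abbrev wx (j : Fin p) : CWVert m p s t := Sum.inr (Sum.inl j)
abbrev lx (i : Fin m) (k : Fin (s i)) : CWVert m p s t := Sum.inr (Sum.inr (Sum.inl ⟨i, k⟩))
abbrev tx (j : Fin p) (l : Fin (t j)) (a : Fin 2) : CWVert m p s t :=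
  Sum.inr (Sum.inr (Sum.inr ⟨j, (l, a)⟩))

lemma adj_vw (i : Fin m) (j : Fin p) : (CWGraph m p E s t).Adj (vx i) (wx j) ↔ E i j := by
  simp [CWGraph, SimpleGraph.fromRel_adj]

lemma adj_vl (i i' : Fin m) (k : Fin (s i')) :
    (CWGraph m p E s t).Adj (vx i) (lx i' k) ↔ i = i' := by
  simp [CWGraph, SimpleGraph.fromRel_adj]

lemma adj_wt (j j' : Fin p) (l : Fin (t j')) (a : Fin 2) :
    (CWGraph m p E s t).Adj (wx j) (tx j' l a) ↔ j = j' := by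
  simp [CWGraph, SimpleGraph.fromRel_adj]

lemma adj_tt (j j' : Fin p) (l : Fin (t j)) (l' : Fin (t j')) (a a' : Fin 2) :
    (CWGraph m p E s t).Adj (tx j l a) (tx j' l' a') ↔ (j = j' ∧ HEq l l' ∧ a ≠ a') := by
  simp only [CWGraph, SimpleGraph.fromRel_adj, ne_eq, Sum.inr.injEq, Sigma.mk.inj_iff]
  constructor
  · rintro ⟨hne, (⟨rfl, h2⟩|⟨rfl, h2⟩)⟩ <;> cases h2 <;>
      exact ⟨rfl, HEq.rfl, fun h => by simp [h] at hne⟩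
  · rintro ⟨rfl, h2, h3⟩; cases h2
    exact ⟨by simpa using h3, Or.inl ⟨rfl, HEq.rfl⟩⟩

lemma not_adj_vv (i i' : Fin m) : ¬ (CWGraph m p E s t).Adj (vx i) (vx i' : _) := by
  simp [CWGraph, SimpleGraph.fromRel_adj]

lemma not_adj_ww (j j' : Fin p) : ¬ (CWGraph m p E s t).Adj (wx j) (wx j' : _) := by
  simp [CWGraph, SimpleGraph.fromRel_adj]

lemma not_adj_wl (j : Fin p) (i : Fin m) (k : Fin (s i)) :
    ¬ (CWGraph m p E s t).Adj (wx j) (lx i k) := by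
  simp [CWGraph, SimpleGraph.fromRel_adj]

lemma not_adj_ll (i i' : Fin m) (k : Fin (s i)) (k' : Fin (s i')) :
    ¬ (CWGraph m p E s t).Adj (lx i k) (lx i' k') := by
  simp [CWGraph, SimpleGraph.fromRel_adj]

lemma not_adj_lt (i : Fin m) (k : Fin (s i)) (j : Fin p) (l : Fin (t j)) (a : Fin 2) :
    ¬ (CWGraph m p E s t).Adj (lx i k) (tx j l a) := by
  simp [CWGraph, SimpleGraph.fromRel_adj]

lemma not_adj_vt (i : Fin m) (j : Fin p) (l : Fin (t j)) (a : Fin 2) :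
    ¬ (CWGraph m p E s t).Adj (vx i) (tx j l a) := by
  simp [CWGraph, SimpleGraph.fromRel_adj]

lemma adj_of_leaf (u : CWVert m p s t) (i : Fin m) (k : Fin (s i))
    (h : (CWGraph m p E s t).Adj u (lx i k)) : u = vx i := by
  obtain (i'|j'|⟨i',k'⟩|⟨j',l',a'⟩) := u
  · rw [adj_vl] at h; rw [h]
  · exact absurd h (not_adj_wl _ _ _)
  · exact absurd h (not_adj_ll _ _ _ _)
  · exact absurd h.symm (not_adj_lt _ _ _ _ _)

lemma adj_of_tri (u : CWVert m p s t) (j : Fin p) (l : Fin (t j)) (a : Fin 2)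
    (h : (CWGraph m p E s t).Adj u (tx j l a)) :
    u = wx j ∨ ∃ a' : Fin 2, u = tx j l a' := by
  obtain (i'|j'|⟨i',k'⟩|⟨j',l',a'⟩) := u
  · exact absurd h (not_adj_vt _ _ _ _)
  · rw [adj_wt] at h; left; rw [h]
  · exact absurd h (not_adj_lt _ _ _ _ _)
  · rw [adj_tt] at h
    obtain ⟨rfl, h2, h3⟩ := h
    cases h2
    exact Or.inr ⟨a', rfl⟩

end CWaux

namespace Stmt19

open CWaux

variable (m s t : ℕ)

abbrev S : Fin m → ℕ := fun i => if (i : ℕ) = m - 1 then s else 1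
abbrev T : Fin 2 → ℕ := fun j => if j = 0 then t else 0
abbrev Ed : Fin m → Fin 2 → Prop := fun i j => ((i : ℕ) = 0 ∧ j = 0) ∨ j = 1
abbrev Vtx := CWVert m 2 (S m s) (T t)
abbrev Gr : SimpleGraph (Vtx m s t) := CWGraph m 2 (Ed m) (S m s) (T t)

variable {m s t}

lemma S_pos (hs : 1 ≤ s) (i : Fin m) : 1 ≤ S m s i := by
  unfold S; split <;> omega

lemma T_zero : T t 0 = t := rfl

lemma T_one : T t 1 = 0 := rfl

lemma fin2_cases (j : Fin 2) : j = 0 ∨ j = 1 := by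
  fin_cases j
  · exact Or.inl rfl
  · exact Or.inr rfl

lemma tri_fst (x : Σ j : Fin 2, Fin (T t j) × Fin 2) : x.1 = 0 := by
  obtain ⟨j, l, a⟩ := x
  rcases fin2_cases j with rfl | rfl
  · rfl
  · have h0 : (l : ℕ) < 0 := l.2
    omega

lemma sum_S (hm : 1 ≤ m) : ∑ i : Fin m, S m s i = m - 1 + s := by
  have hmem : (⟨m - 1, by omega⟩ : Fin m) ∈ (Finset.univ : Finset (Fin m)) := Finset.mem_univ _
  rw [Finset.sum_eq_sum_sdiff_singleton_add hmem]
  have h1 : ∑ i ∈ Finset.univ \ {(⟨m - 1, by omega⟩ : Fin m)}, S m s i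
      = ∑ i ∈ Finset.univ \ {(⟨m - 1, by omega⟩ : Fin m)}, 1 := by
    apply Finset.sum_congr rfl
    intro i hi
    rw [Finset.mem_sdiff, Finset.mem_singleton] at hi
    have : (i : ℕ) ≠ m - 1 := fun h => hi.2 (Fin.ext h)
    simp [S, this]
  rw [h1, Finset.sum_const, smul_eq_mul, mul_one]
  have h2 : (Finset.univ \ {(⟨m - 1, by omega⟩ : Fin m)}).card = m - 1 := by
    rw [Finset.card_sdiff_of_subset (by simp)]
    simp
  rw [h2]
  simp [S]

lemma card_Vtx (hm : 1 ≤ m) : Fintype.card (Vtx m s t) = 2 * m + s + 2 * t + 1 := by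
  have h2 : ∑ i : Fin m, S m s i = m - 1 + s := sum_S hm
  have h3 : ∑ j : Fin 2, T t j * 2 = 2 * t := by
    rw [Fin.sum_univ_two, T_zero, T_one]; ring
  have : Fintype.card (Vtx m s t)
      = m + (2 + ((∑ i : Fin m, S m s i) + (∑ j : Fin 2, T t j * 2))) := by
    simp [Fintype.card_sum, Fintype.card_sigma, Finset.sum_add_distrib, mul_two]
  rw [this, h2, h3]
  omega

variable (m s t) in
def φ (ht : 0 < t) : Vtx m s t → Fin m ⊕ Fin t
  | Sum.inl i => Sum.inl i
  | Sum.inr (Sum.inl _) => Sum.inr ⟨0, ht⟩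
  | Sum.inr (Sum.inr (Sum.inl ⟨i, _⟩)) => Sum.inl i
  | Sum.inr (Sum.inr (Sum.inr ⟨_, l, _⟩)) => Sum.inr ⟨(l : ℕ) % t, Nat.mod_lt _ ht⟩

section bounds

variable {ht : 0 < t} {A : Finset (Vtx m s t)}

lemma fiber_star (hA : (Gr m s t).IsIndepFinset A) (i : Fin m) (hs : 1 ≤ s) :
    (A.filter fun x => φ m s t ht x = Sum.inl i).card ≤ S m s i := by
  by_cases hv : (vx i : Vtx m s t) ∈ A
  · have hsub : (A.filter fun x => φ m s t ht x = Sum.inl i) ⊆ {vx i} := by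
      intro x hx
      rw [Finset.mem_filter] at hx
      obtain ⟨hxA, hφ⟩ := hx
      obtain (i'|j'|⟨i',k'⟩|⟨j',l',a'⟩) := x
      · simp only [φ, Sum.inl.injEq] at hφ
        subst hφ; simp
      · simp only [φ] at hφ; exact absurd hφ (by simp)
      · simp only [φ, Sum.inl.injEq] at hφ
        subst hφ
        exact absurd ((adj_vl i' i' k').mpr rfl) (hA _ hv _ hxA)
      · simp only [φ] at hφ; exact absurd hφ (by simp)
    calc (A.filter fun x => φ m s t ht x = Sum.inl i).card
        ≤ ({vx i} : Finset (Vtx m s t)).card := Finset.card_le_card hsub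
      _ = 1 := Finset.card_singleton _
      _ ≤ S m s i := S_pos hs i
  · have hsub : (A.filter fun x => φ m s t ht x = Sum.inl i)
        ⊆ Finset.univ.image (fun k : Fin (S m s i) => (lx i k : Vtx m s t)) := by
      intro x hx
      rw [Finset.mem_filter] at hx
      obtain ⟨hxA, hφ⟩ := hx
      obtain (i'|j'|⟨i',k'⟩|⟨j',l',a'⟩) := x
      · simp only [φ, Sum.inl.injEq] at hφ
        subst hφ; exact absurd hxA hv
      · simp only [φ] at hφ; exact absurd hφ (by simp)
      · simp only [φ, Sum.inl.injEq] at hφ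
        subst hφ
        exact Finset.mem_image_of_mem _ (Finset.mem_univ k')
      · simp only [φ] at hφ; exact absurd hφ (by simp)
    calc (A.filter fun x => φ m s t ht x = Sum.inl i).card
        ≤ (Finset.univ.image (fun k : Fin (S m s i) => (lx i k : Vtx m s t))).card :=
          Finset.card_le_card hsub
      _ ≤ (Finset.univ : Finset (Fin (S m s i))).card := Finset.card_image_le
      _ = S m s i := by simp

lemma mem_fiber_classify (l : Fin t) (x : Vtx m s t)
    (hx : x ∈ A.filter fun x => φ m s t ht x = Sum.inr l) :
    ((x = wx 0 ∨ x = wx 1) ∧ (l : ℕ) = 0) ∨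
      ∃ (l' : Fin (T t 0)) (a : Fin 2), (l' : ℕ) = (l : ℕ) ∧ x = tx 0 l' a := by
  rw [Finset.mem_filter] at hx
  obtain ⟨hxA, hφ⟩ := hx
  obtain (i'|j'|⟨i',k'⟩|⟨j',l',a'⟩) := x
  · simp only [φ] at hφ; exact absurd hφ (by simp)
  · left
    constructor
    · rcases fin2_cases j' with rfl | rfl
      · exact Or.inl rfl
      · exact Or.inr rfl
    · simp only [φ, Sum.inr.injEq] at hφ
      have := congrArg Fin.val hφ
      simpa using this.symm
  · simp only [φ] at hφ; exact absurd hφ (by simp)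
  · right
    have hj : j' = 0 := tri_fst ⟨j', l', a'⟩
    subst hj
    refine ⟨l', a', ?_, rfl⟩
    simp only [φ, Sum.inr.injEq] at hφ
    have hlt : (l' : ℕ) < t := l'.2
    have hval : (l' : ℕ) % t = (l : ℕ) := congrArg Fin.val hφ
    rw [Nat.mod_eq_of_lt hlt] at hval
    exact hval

lemma fiber_tri (hA : (Gr m s t).IsIndepFinset A) (l : Fin t) (hl : (l : ℕ) ≠ 0) :
    (A.filter fun x => φ m s t ht x = Sum.inr l).card ≤ 1 := by
  rw [Finset.card_le_one]
  intro a ha b hb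
  have haA : a ∈ A := (Finset.mem_filter.mp ha).1
  have hbA : b ∈ A := (Finset.mem_filter.mp hb).1
  rcases mem_fiber_classify l a ha with ⟨-, h0⟩ | ⟨la, aa, hla, rfl⟩
  · exact absurd h0 hl
  rcases mem_fiber_classify l b hb with ⟨-, h0⟩ | ⟨lb, ab, hlb, rfl⟩
  · exact absurd h0 hl
  have hll : la = lb := Fin.ext (by omega)
  subst hll
  by_cases hab : aa = ab
  · rw [hab]
  · exact absurd ((adj_tt 0 0 la la aa ab).mpr ⟨rfl, HEq.rfl, hab⟩) (hA _ haA _ hbA)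

lemma fiber_zero (hA : (Gr m s t).IsIndepFinset A) (l : Fin t) (hl : (l : ℕ) = 0) :
    (A.filter fun x => φ m s t ht x = Sum.inr l).card ≤ 2 := by
  haveI : DecidablePred (fun x : Vtx m s t => x ≠ wx 0 ∧ x ≠ wx 1) :=
    fun x => instDecidableAnd
  by_cases hw : (wx 0 : Vtx m s t) ∈ A
  · have hsub : (A.filter fun x => φ m s t ht x = Sum.inr l)
        ⊆ {wx 0, wx 1} := by
      intro x hx
      have hxA : x ∈ A := (Finset.mem_filter.mp hx).1
      rcases mem_fiber_classify l x hx with ⟨h01, -⟩ | ⟨l', a, -, rfl⟩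
      · rcases h01 with rfl | rfl <;> simp
      · exact absurd ((adj_wt 0 0 l' a).mpr rfl) (hA _ hw _ hxA)
    calc _ ≤ ({wx 0, wx 1} : Finset (Vtx m s t)).card := Finset.card_le_card hsub
      _ ≤ 2 := Finset.card_insert_le _ _ |>.trans (by simp)
  · set B := (A.filter fun x => φ m s t ht x = Sum.inr l).filter
        (fun x => x ≠ wx 0 ∧ x ≠ wx 1) with hB
    have hBcard : B.card ≤ 1 := by
      rw [Finset.card_le_one]
      intro a ha b hb
      obtain ⟨ha1, ha2⟩ := Finset.mem_filter.mp ha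
      obtain ⟨hb1, hb2⟩ := Finset.mem_filter.mp hb
      have haA : a ∈ A := (Finset.mem_filter.mp ha1).1
      have hbA : b ∈ A := (Finset.mem_filter.mp hb1).1
      rcases mem_fiber_classify l a ha1 with ⟨(rfl | rfl), -⟩ | ⟨la, aa, hla, rfl⟩
      · exact absurd rfl ha2.1
      · exact absurd rfl ha2.2
      rcases mem_fiber_classify l b hb1 with ⟨(rfl | rfl), -⟩ | ⟨lb, ab, hlb, rfl⟩
      · exact absurd rfl hb2.1
      · exact absurd rfl hb2.2
      have hll : la = lb := Fin.ext (by omega)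
      subst hll
      by_cases hab : aa = ab
      · rw [hab]
      · exact absurd ((adj_tt 0 0 la la aa ab).mpr ⟨rfl, HEq.rfl, hab⟩) (hA _ haA _ hbA)
    have hsub : (A.filter fun x => φ m s t ht x = Sum.inr l) ⊆ insert (wx 1) B := by
      intro x hx
      have hxA : x ∈ A := (Finset.mem_filter.mp hx).1
      rcases mem_fiber_classify l x hx with ⟨(rfl | rfl), -⟩ | ⟨l', a, -, rfl⟩
      · exact absurd hxA hw
      · exact Finset.mem_insert_self _ _
      · refine Finset.mem_insert_of_mem ?_
        rw [hB, Finset.mem_filter]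
        exact ⟨hx, by simp, by simp⟩
    calc _ ≤ (insert (wx 1 : Vtx m s t) B).card := Finset.card_le_card hsub
      _ ≤ B.card + 1 := Finset.card_insert_le _ _
      _ ≤ 2 := by omega

end bounds

end Stmt19

namespace Part2

open CWaux

variable {m s t : ℕ}

lemma sum_bound (ht : 0 < t) :
    ∑ l : Fin t, (if (l : ℕ) = 0 then 2 else 1) = t + 1 := by
  have hmem : (⟨0, ht⟩ : Fin t) ∈ (Finset.univ : Finset (Fin t)) := Finset.mem_univ _
  rw [Finset.sum_eq_sum_sdiff_singleton_add hmem]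
  have h1 : ∑ l ∈ Finset.univ \ {(⟨0, ht⟩ : Fin t)}, (if (l : ℕ) = 0 then 2 else 1)
      = ∑ l ∈ Finset.univ \ {(⟨0, ht⟩ : Fin t)}, 1 := by
    apply Finset.sum_congr rfl
    intro l hl
    rw [Finset.mem_sdiff, Finset.mem_singleton] at hl
    have : (l : ℕ) ≠ 0 := fun h => hl.2 (Fin.ext h)
    simp [this]
  rw [h1, Finset.sum_const, smul_eq_mul, mul_one]
  have h2 : (Finset.univ \ {(⟨0, ht⟩ : Fin t)}).card = t - 1 := by
    rw [Finset.card_sdiff_of_subset (by simp)]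
    simp
  rw [h2]
  simp
  omega

lemma indep_card_le (hm : 1 ≤ m) (hs : 1 ≤ s) (ht : 0 < t)
    (A : Finset (Stmt19.Vtx m s t)) (hA : (Stmt19.Gr m s t).IsIndepFinset A) :
    A.card ≤ m + s + t := by
  rw [Finset.card_eq_sum_card_fiberwise
    (f := Stmt19.φ m s t ht) (t := Finset.univ) (fun x _ => Finset.mem_univ _)]
  have hle : ∀ p : Fin m ⊕ Fin t,
      (A.filter fun x => Stmt19.φ m s t ht x = p).card
        ≤ Sum.elim (Stmt19.S m s) (fun l : Fin t => if (l : ℕ) = 0 then 2 else 1) p := by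
    rintro (i | l)
    · exact Stmt19.fiber_star hA i hs
    · by_cases h0 : (l : ℕ) = 0
      · simpa [h0] using Stmt19.fiber_zero hA l h0
      · simpa [h0] using Stmt19.fiber_tri hA l h0
  calc ∑ p : Fin m ⊕ Fin t, (A.filter fun x => Stmt19.φ m s t ht x = p).card
      ≤ ∑ p : Fin m ⊕ Fin t,
          Sum.elim (Stmt19.S m s) (fun l : Fin t => if (l : ℕ) = 0 then 2 else 1) p :=
        Finset.sum_le_sum (fun p _ => hle p)
    _ = (∑ i : Fin m, Stmt19.S m s i) + ∑ l : Fin t, (if (l : ℕ) = 0 then 2 else 1) :=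
        Fintype.sum_sum_type _
    _ = (m - 1 + s) + (t + 1) := by rw [Stmt19.sum_S hm, sum_bound ht]
    _ = m + s + t := by omega

/-- domain of the maximum independent set -/
abbrev Dg (m s t : ℕ) : Type :=
  Unit ⊕ (Σ i : Fin m, Fin (Stmt19.S m s i)) ⊕ Fin (Stmt19.T t 0)

def fg : Dg m s t → Stmt19.Vtx m s t
  | Sum.inl _ => wx 1
  | Sum.inr (Sum.inl ⟨i, k⟩) => lx i k
  | Sum.inr (Sum.inr l) => tx 0 l 0

lemma fg_inj : Function.Injective (fg : Dg m s t → Stmt19.Vtx m s t) := by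
  intro a b h
  rcases a with _ | (⟨i, k⟩ | la) <;> rcases b with _ | (⟨i', k'⟩ | lb) <;>
    simp_all [fg]

def Agr (m s t : ℕ) : Finset (Stmt19.Vtx m s t) := Finset.univ.map ⟨fg, fg_inj⟩

lemma Agr_card (hm : 1 ≤ m) : (Agr m s t).card = m + s + t := by
  rw [Agr, Finset.card_map]
  have : Fintype.card (Dg m s t)
      = 1 + ((∑ i : Fin m, Stmt19.S m s i) + t) := by
    simp [Fintype.card_sum, Fintype.card_sigma, Stmt19.T_zero]
  rw [Finset.card_univ, this, Stmt19.sum_S hm]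
  omega

lemma Agr_indep : (Stmt19.Gr m s t).IsIndepFinset (Agr m s t) := by
  intro u hu v hv
  rw [Agr, Finset.mem_map] at hu hv
  obtain ⟨a, -, rfl⟩ := hu
  obtain ⟨b, -, rfl⟩ := hv
  rcases a with _ | (⟨i, k⟩ | la) <;> rcases b with _ | (⟨i', k'⟩ | lb)
  · exact not_adj_ww _ _
  · exact not_adj_wl _ _ _
  · intro h
    rw [show (Function.Embedding.mk fg fg_inj) (Sum.inl _) = wx 1 from rfl,
      show (Function.Embedding.mk fg fg_inj) (Sum.inr (Sum.inr lb)) = tx 0 lb 0 from rfl,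
      adj_wt] at h
    exact absurd h (by decide)
  · exact fun h => not_adj_wl _ _ _ h.symm
  · exact not_adj_ll _ _ _ _
  · exact not_adj_lt _ _ _ _ _
  · intro h
    rw [show (Function.Embedding.mk fg fg_inj) (Sum.inl _) = wx 1 from rfl,
      show (Function.Embedding.mk fg fg_inj) (Sum.inr (Sum.inr la)) = tx 0 la 0 from rfl] at h
    exact absurd ((adj_wt _ _ _ _).mp h.symm) (by decide)
  · exact fun h => not_adj_lt _ _ _ _ _ h.symm
  · intro h
    rw [show (Function.Embedding.mk fg fg_inj) (Sum.inr (Sum.inr la)) = tx 0 la 0 from rfl,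
      show (Function.Embedding.mk fg fg_inj) (Sum.inr (Sum.inr lb)) = tx 0 lb 0 from rfl,
      adj_tt] at h
    exact h.2.2 rfl

end Part2

namespace Part3

open CWaux

variable {m s t : ℕ}

/-- domain of the minimum independent dominating set -/
abbrev Dl (m : ℕ) : Type := Fin (m - 1) ⊕ Unit ⊕ Unit

variable (m s t) in
def fl (hm : 2 ≤ m) (hs : 1 ≤ s) : Dl m → Stmt19.Vtx m s t
  | Sum.inl k => vx ⟨(k : ℕ) + 1, by have := k.2; omega⟩
  | Sum.inr (Sum.inl _) => wx 0
  | Sum.inr (Sum.inr _) => lx ⟨0, by omega⟩ ⟨0, Stmt19.S_pos hs _⟩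

lemma fl_inj (hm : 2 ≤ m) (hs : 1 ≤ s) : Function.Injective (fl m s t hm hs) := by
  intro a b h
  rcases a with k | (_ | _) <;> rcases b with k' | (_ | _) <;> simp_all [fl]
  exact Fin.ext h

variable (m s t) in
def Al (hm : 2 ≤ m) (hs : 1 ≤ s) : Finset (Stmt19.Vtx m s t) :=
  Finset.univ.map ⟨fl m s t hm hs, fl_inj hm hs⟩

lemma Al_card (hm : 2 ≤ m) (hs : 1 ≤ s) : (Al m s t hm hs).card = m + 1 := by
  rw [Al, Finset.card_map, Finset.card_univ]
  simp only [Fintype.card_sum, Fintype.card_fin, Fintype.card_unit]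
  omega

lemma Al_indep (hm : 2 ≤ m) (hs : 1 ≤ s) :
    (Stmt19.Gr m s t).IsIndepFinset (Al m s t hm hs) := by
  intro u hu v hv
  rw [Al, Finset.mem_map] at hu hv
  obtain ⟨a, -, rfl⟩ := hu
  obtain ⟨b, -, rfl⟩ := hv
  have hvw : ∀ (k : Fin (m - 1)),
      ¬ (Stmt19.Gr m s t).Adj (vx ⟨(k : ℕ) + 1, by have := k.2; omega⟩) (wx 0) := by
    intro k h
    rw [adj_vw] at h
    rcases h with ⟨h1, -⟩ | h2
    · simp at h1
    · exact absurd h2 (by decide)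
  have hvl : ∀ (k : Fin (m - 1)),
      ¬ (Stmt19.Gr m s t).Adj (vx ⟨(k : ℕ) + 1, by have := k.2; omega⟩)
        (lx (⟨0, by omega⟩ : Fin m) ⟨0, Stmt19.S_pos hs _⟩) := by
    intro k h
    rw [adj_vl] at h
    have := congrArg Fin.val h
    simp at this
  rcases a with k | (_ | _) <;> rcases b with k' | (_ | _)
  · exact not_adj_vv _ _
  · exact hvw k
  · exact hvl k
  · exact fun h => hvw k' h.symm
  · exact not_adj_ww _ _
  · exact not_adj_wl _ _ _
  · exact fun h => hvl k' h.symm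
  · exact fun h => not_adj_wl _ _ _ h.symm
  · exact not_adj_ll _ _ _ _

lemma Al_dom (hm : 2 ≤ m) (hs : 1 ≤ s) :
    ∀ x : Stmt19.Vtx m s t, x ∈ Al m s t hm hs ∨
      ∃ u ∈ Al m s t hm hs, (Stmt19.Gr m s t).Adj u x := by
  have hmem : ∀ d : Dl m, fl m s t hm hs d ∈ Al m s t hm hs := fun d =>
    Finset.mem_map.mpr ⟨d, Finset.mem_univ d, rfl⟩
  intro x
  obtain (i | j | ⟨i, k⟩ | ⟨j, l, a⟩) := x
  · -- x = vx i
    by_cases hi : (i : ℕ) = 0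
    · right
      refine ⟨wx 0, hmem (Sum.inr (Sum.inl ())), ?_⟩
      have : (Stmt19.Gr m s t).Adj (vx i) (wx 0) := (adj_vw i 0).mpr (Or.inl ⟨hi, rfl⟩)
      exact this.symm
    · left
      have h2 := i.2
      have heq : fl m s t hm hs (Sum.inl ⟨(i : ℕ) - 1, by omega⟩) = vx i := by
        simp only [fl]
        congr 1
        exact Fin.ext (by simp; omega)
      exact Finset.mem_map.mpr ⟨Sum.inl ⟨(i : ℕ) - 1, by omega⟩, Finset.mem_univ _, heq⟩
  · -- x = wx j
    rcases Stmt19.fin2_cases j with rfl | rfl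
    · exact Or.inl (hmem (Sum.inr (Sum.inl ())))
    · right
      refine ⟨vx ⟨1, by omega⟩, ?_, ?_⟩
      · exact Finset.mem_map.mpr ⟨Sum.inl ⟨0, by omega⟩, Finset.mem_univ _, rfl⟩
      · exact (adj_vw _ 1).mpr (Or.inr rfl)
  · -- x = lx i k
    by_cases hi : (i : ℕ) = 0
    · left
      obtain ⟨iv, hiv⟩ := i
      have hiv0 : iv = 0 := hi
      subst hiv0
      have hk : (k : ℕ) = 0 := by
        have h2 := k.2
        have hS : Stmt19.S m s ⟨0, hiv⟩ = 1 := if_neg (by simp; omega)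
        omega
      have hkeq : k = (⟨0, Stmt19.S_pos hs _⟩ : Fin (Stmt19.S m s ⟨0, hiv⟩)) :=
        Fin.ext hk
      subst hkeq
      exact hmem (Sum.inr (Sum.inr ()))
    · right
      refine ⟨vx i, ?_, (adj_vl i i k).mpr rfl⟩
      have h2 := i.2
      have heq : fl m s t hm hs (Sum.inl ⟨(i : ℕ) - 1, by omega⟩) = vx i := by
        simp only [fl]
        congr 1
        exact Fin.ext (by simp; omega)
      exact Finset.mem_map.mpr ⟨Sum.inl ⟨(i : ℕ) - 1, by omega⟩, Finset.mem_univ _, heq⟩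
  · -- x = tx j l a
    right
    have hj : j = 0 := Stmt19.tri_fst ⟨j, l, a⟩
    subst hj
    exact ⟨wx 0, hmem (Sum.inr (Sum.inl ())), (adj_wt 0 0 l a).mpr rfl⟩

lemma dom_card_ge (hm : 2 ≤ m) (hs : 1 ≤ s) (ht : 0 < t)
    (A : Finset (Stmt19.Vtx m s t)) (hA : (Stmt19.Gr m s t).IsIndepDomFinset A) :
    m + 1 ≤ A.card := by
  have h1 : ∀ i : Fin m, ∃ x ∈ A, Stmt19.φ m s t ht x = Sum.inl i := by
    intro i
    rcases hA.2 (lx i ⟨0, Stmt19.S_pos hs i⟩) with hmem | ⟨u, huA, hadj⟩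
    · exact ⟨_, hmem, rfl⟩
    · have := adj_of_leaf u i _ hadj
      subst this
      exact ⟨_, huA, rfl⟩
  have h2 : ∃ y ∈ A, ∃ z : Fin t, Stmt19.φ m s t ht y = Sum.inr z := by
    rcases hA.2 (tx 0 (⟨0, ht⟩ : Fin (Stmt19.T t 0)) 0) with hmem | ⟨u, huA, hadj⟩
    · exact ⟨_, hmem, _, rfl⟩
    · rcases adj_of_tri u 0 _ 0 hadj with rfl | ⟨a', rfl⟩
      · exact ⟨_, huA, _, rfl⟩
      · exact ⟨_, huA, _, rfl⟩
  choose g hg hg2 using h1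
  obtain ⟨y, hyA, z, hyz⟩ := h2
  have hcard := Finset.card_le_card_of_injOn (s := (Finset.univ : Finset (Fin m ⊕ Unit)))
    (t := A) (Sum.elim g fun _ : Unit => y) ?_ ?_
  · rwa [Finset.card_univ, Fintype.card_sum, Fintype.card_fin, Fintype.card_unit] at hcard
  · rintro (i | u) -
    · exact hg i
    · exact hyA
  · rintro (i | u) - (i' | u') - hab
    · have := congrArg (Stmt19.φ m s t ht) hab
      rw [Sum.elim_inl, Sum.elim_inl, hg2 i, hg2 i'] at this
      rw [Sum.inl.injEq] at this
      rw [this]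
    · have := congrArg (Stmt19.φ m s t ht) hab
      rw [Sum.elim_inl, Sum.elim_inr, hg2 i, hyz] at this
      exact absurd this (by simp)
    · have := congrArg (Stmt19.φ m s t ht) hab
      rw [Sum.elim_inr, Sum.elim_inl, hg2 i', hyz] at this
      exact absurd this (by simp)
    · cases u; cases u'; rfl

end Part3

/-- the Cameron–Walker graph `G⁽²⁾_{m,s,t}` (with `p = 2`, one leaf at
each of `v₁,…,v_{m−1}`, `s` leaves at `vₘ`, `t` pendant triangles at `w₁`, none at
`w₂`, and bipartite edges `{v₁,w₁}, {v₁,w₂}, {v₂,w₂}, …, {vₘ,w₂}`) has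
`2m + s + 2t + 1` vertices, independence number `m + s + t`, and `i(G) = m + 1`. -/
theorem stmt_19 (m s t : ℕ) (hm : 2 ≤ m) (hs : 1 ≤ s) (ht : 1 ≤ t) :
    Fintype.card (CWVert m 2 (fun i => if (i : ℕ) = m - 1 then s else 1)
        (fun j => if j = 0 then t else 0)) = 2 * m + s + 2 * t + 1 ∧
    IsGreatest {k : ℕ | ∃ A : Finset (CWVert m 2
          (fun i => if (i : ℕ) = m - 1 then s else 1) (fun j => if j = 0 then t else 0)),
        (CWGraph m 2 (fun i j => ((i : ℕ) = 0 ∧ j = 0) ∨ j = 1)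
          (fun i => if (i : ℕ) = m - 1 then s else 1)
          (fun j => if j = 0 then t else 0)).IsIndepFinset A ∧ A.card = k}
      (m + s + t) ∧
    IsLeast {k : ℕ | ∃ A : Finset (CWVert m 2
          (fun i => if (i : ℕ) = m - 1 then s else 1) (fun j => if j = 0 then t else 0)),
        (CWGraph m 2 (fun i j => ((i : ℕ) = 0 ∧ j = 0) ∨ j = 1)
          (fun i => if (i : ℕ) = m - 1 then s else 1)
          (fun j => if j = 0 then t else 0)).IsIndepDomFinset A ∧ A.card = k}
      (m + 1) := by
  refine ⟨Stmt19.card_Vtx (by omega),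
    ⟨⟨Part2.Agr m s t, Part2.Agr_indep, Part2.Agr_card (by omega)⟩, ?_⟩,
    ⟨⟨Part3.Al m s t hm hs, ⟨Part3.Al_indep hm hs, Part3.Al_dom hm hs⟩,
      Part3.Al_card hm hs⟩, ?_⟩⟩
  · rintro k ⟨A, hA, rfl⟩
    exact Part2.indep_card_le (by omega) hs (by omega) A hA
  · rintro k ⟨A, hA, rfl⟩
    exact Part3.dom_card_ge hm hs (by omega) A hA
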